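/- Let s₁, …, s_N be i.i.d. nonnegative real-valued random variables and ξ > 0. Then Pr{ Σ_{n=1}^N s_n ≤ N·ξ } ≤ 2 · Pr{ s₁ ≤ 2ξ }. -/

import Mathlib

open Finset MeasureTheory
open scoped ENNReal

lemma pi_map_eval_aux {ι : Type*} [Fintype ι] [DecidableEq ι] {Ω : Type*} [MeasurableSpace Ω]
    (P : Measure Ω) [IsProbabilityMeasure P] (i : ι) :
    MeasurePreserving (Function.eval i) (Measure.pi fun _ : ι => P) P := by
  constructor
  · exact measurable_pi_apply i
  · refine Measure.ext fun A hA => ?_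
    rw [Measure.map_apply (measurable_pi_apply i) hA, Set.eval_preimage,
      Measure.pi_pi]
    have : ∀ x : ι, P (Function.update (fun _ => (Set.univ : Set Ω)) i A x) = if x = i then P A else 1 := by
      intro x
      by_cases hx : x = i <;> simp [Function.update, hx]
    rw [Finset.prod_congr rfl fun x _ => this x]
    simp

theorem small_deviation_scalar
    {Ω : Type*} [MeasurableSpace Ω] (P : Measure Ω) [IsProbabilityMeasure P]
    (N : ℕ) (hN : 1 ≤ N) (s : Ω → ℝ)
    (hmeas : Measurable s) (hnonneg : ∀ᵐ x ∂P, 0 ≤ s x)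
    (ξ : ℝ) (hξ : 0 < ξ) :
    (Measure.pi fun _ : Fin N => P) {ω | ∑ n : Fin N, s (ω n) ≤ N * ξ}
      ≤ 2 * P {x | s x ≤ 2 * ξ} := by
  classical
  set μ := Measure.pi fun _ : Fin N => P with hμ
  set p := P {x | s x ≤ 2 * ξ} with hp
  have hset : MeasurableSet {x : Ω | s x ≤ 2 * ξ} := hmeas measurableSet_Iic
  set f : Ω → ℝ≥0∞ := Set.indicator {x | s x ≤ 2 * ξ} (fun _ => 1) with hf
  have hfm : Measurable f := (measurable_const.indicator hset)
  set g : (Fin N → Ω) → ℝ≥0∞ := fun ω => ∑ n : Fin N, f (ω n) with hg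
  have hgm : Measurable g :=
    Finset.measurable_sum _ fun n _ => hfm.comp (measurable_pi_apply n)
  have hNpos : (0:ℝ≥0∞) < (N:ℝ≥0∞) := by
    exact_mod_cast Nat.cast_pos.mpr hN
  -- integral of g
  have hIf : ∫⁻ x, f x ∂P = p := by
    exact lintegral_indicator_one (μ := P) hset
  have hI : ∫⁻ ω, g ω ∂μ = N * p := by
    have hsum : ∫⁻ ω, g ω ∂μ = ∑ n : Fin N, ∫⁻ ω, f (ω n) ∂μ :=
      lintegral_finset_sum (f := fun (n : Fin N) (ω : Fin N → Ω) => f (ω n)) _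
        (fun n _ => hfm.comp (measurable_pi_apply n))
    have heach : ∀ n : Fin N, ∫⁻ ω, f (ω n) ∂μ = p := fun n =>
      ((pi_map_eval_aux P n).lintegral_comp hfm).trans hIf
    rw [hsum]
    simp [heach, mul_comm]
  -- Markov
  have hε0 : ((N:ℝ≥0∞)/2) ≠ 0 := by
    simp [ENNReal.div_eq_zero_iff, hNpos.ne']
  have hεtop : ((N:ℝ≥0∞)/2) ≠ ⊤ := by
    simp [ENNReal.div_eq_top]
  have hmarkov : μ {ω | (N:ℝ≥0∞)/2 ≤ g ω} ≤ (N * p) / ((N:ℝ≥0∞)/2) := by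
    rw [← hI]
    exact meas_ge_le_lintegral_div hgm.aemeasurable hε0 hεtop
  -- a.e. inclusion
  have hae : ∀ᵐ ω ∂μ, ∀ n : Fin N, 0 ≤ s (ω n) := by
    rw [MeasureTheory.ae_all_iff]
    intro n
    exact (pi_map_eval_aux P n).quasiMeasurePreserving.ae hnonneg
  have hincl : μ {ω | ∑ n : Fin N, s (ω n) ≤ N * ξ} ≤ μ {ω | (N:ℝ≥0∞)/2 ≤ g ω} := by
    apply measure_mono_ae
    filter_upwards [hae] with ω hω hmem
    replace hmem : ∑ n : Fin N, s (ω n) ≤ N * ξ := hmem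
    show (N:ℝ≥0∞)/2 ≤ g ω
    -- count good coordinates
    set T : Finset (Fin N) := Finset.univ.filter (fun n => ¬ s (ω n) ≤ 2 * ξ) with hT
    set K : Finset (Fin N) := Finset.univ.filter (fun n => s (ω n) ≤ 2 * ξ) with hK
    have hcard : K.card + T.card = N := by
      rw [hK, hT]
      simpa using Finset.card_filter_add_card_filter_not
        (s := (Finset.univ : Finset (Fin N))) (p := fun n => s (ω n) ≤ 2 * ξ)
    have h1 : (2*ξ) * T.card ≤ ∑ n ∈ T, s (ω n) := by
      rw [mul_comm]
      have := Finset.card_nsmul_le_sum T (fun n => s (ω n)) (2*ξ)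
        (fun n hn => le_of_lt (by simpa [hT, not_le] using (Finset.mem_filter.mp hn).2))
      simpa [nsmul_eq_mul] using this
    have h2 : ∑ n ∈ T, s (ω n) ≤ ∑ n : Fin N, s (ω n) :=
      Finset.sum_le_sum_of_subset_of_nonneg (Finset.subset_univ T)
        (fun n _ _ => hω n)
    have h3 : (2:ℝ) * T.card * ξ ≤ N * ξ := by nlinarith
    have h4 : 2 * T.card ≤ N := by
      have := (mul_le_mul_iff_of_pos_right hξ).mp h3
      exact_mod_cast this
    have h5 : N ≤ 2 * K.card := by omega
    have hgval : g ω = (K.card : ℝ≥0∞) := by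
      rw [hg, hf]
      simp only [Set.indicator_apply, Set.mem_setOf_eq]
      rw [Finset.sum_boole]
    rw [hgval]
    apply ENNReal.div_le_of_le_mul
    have : (N:ℝ≥0∞) ≤ ((2 * K.card : ℕ) : ℝ≥0∞) := by exact_mod_cast h5
    calc (N:ℝ≥0∞) ≤ ((2 * K.card : ℕ) : ℝ≥0∞) := this
      _ = (K.card : ℝ≥0∞) * 2 := by push_cast; ring
  calc μ {ω | ∑ n : Fin N, s (ω n) ≤ N * ξ} ≤ (N * p) / ((N:ℝ≥0∞)/2) :=
        hincl.trans hmarkov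
    _ ≤ 2 * p := by
        apply ENNReal.div_le_of_le_mul
        have h2 : (2:ℝ≥0∞) * p * ((N:ℝ≥0∞)/2) = N * p := by
          rw [mul_comm ((2:ℝ≥0∞)*p), ← mul_assoc,
            ENNReal.div_mul_cancel (by norm_num) (by norm_num)]
        rw [h2]
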